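/- arXiv:1603.08596 — 2 statements merged into one kernel-verified Lean document; each statement's English description precedes it below -/
import Mathlib

section
/- Let c_n be defined by c_1 = 1 and c_n = (n-1) Σ_{k=1}^{n-1} c_k c_{n-k}. Then c_{n-1}/c_n = 1/(2n) + 1/(4n²) + O(1/n³) as n → ∞; equivalently, n²·(c_{n-1}/c_n − 1/(2n)) → 1/4. -/
open Filter

lemma cpos (c : ℕ → ℕ) (h1 : c 1 = 1)
    (hrec : ∀ n : ℕ, 2 ≤ n → c n = (n - 1) * ∑ k ∈ Finset.Ico 1 n, c k * c (n - k)) :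
    ∀ n, 1 ≤ n → 1 ≤ c n := by
  intro n
  induction n using Nat.strong_induction_on with
  | _ n ih =>
    intro hn
    rcases Nat.lt_or_ge n 2 with h | h
    · interval_cases n
      · omega
    · rw [hrec n h]
      have hmem : 1 ∈ Finset.Ico 1 n := by simp; omega
      have hterm : 1 ≤ c 1 * c (n - 1) := by
        have := ih (n-1) (by omega) (by omega)
        rw [h1]; omega
      have hsum : c 1 * c (n - 1) ≤ ∑ k ∈ Finset.Ico 1 n, c k * c (n - k) := by
        have : c 1 * c (n - 1) = (fun k => c k * c (n - k)) 1 := by simp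
        rw [this]
        exact Finset.single_le_sum (f := fun k => c k * c (n - k)) (fun i _ => Nat.zero_le _) hmem
      have h2 : 1 ≤ n - 1 := by omega
      calc 1 = 1 * 1 := rfl
        _ ≤ (n-1) * (c 1 * c (n-1)) := Nat.mul_le_mul h2 hterm
        _ ≤ (n-1) * ∑ k ∈ Finset.Ico 1 n, c k * c (n - k) := Nat.mul_le_mul_left _ hsum

lemma sumDecomp (c : ℕ → ℕ) (m : ℕ) :
    (∑ k ∈ Finset.Ico 1 (m+7), c k * c (m+7-k)) =
      (c 1 * c (m+6) + c 2 * c (m+5) + c 3 * c (m+4))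
      + (∑ k ∈ Finset.Ico 4 (m+4), c k * c (m+7-k))
      + (c (m+4) * c 3 + c (m+5) * c 2 + c (m+6) * c 1) := by
  have e1 : ∑ k ∈ Finset.Ico 1 (m+7), c k * c (m+7-k)
      = (∑ k ∈ Finset.Ico 1 4, c k * c (m+7-k)) + ∑ k ∈ Finset.Ico 4 (m+7), c k * c (m+7-k) :=
    (Finset.sum_Ico_consecutive _ (by omega) (by omega)).symm
  have e2 : ∑ k ∈ Finset.Ico 4 (m+7), c k * c (m+7-k)
      = (∑ k ∈ Finset.Ico 4 (m+4), c k * c (m+7-k)) + ∑ k ∈ Finset.Ico (m+4) (m+7), c k * c (m+7-k) :=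
    (Finset.sum_Ico_consecutive _ (by omega) (by omega)).symm
  have e3 : ∑ k ∈ Finset.Ico 1 4, c k * c (m+7-k)
      = c 1 * c (m+6) + c 2 * c (m+5) + c 3 * c (m+4) := by
    rw [show Finset.Ico 1 4 = {1, 2, 3} from rfl]
    rw [Finset.sum_insert (by decide), Finset.sum_insert (by decide), Finset.sum_singleton]
    have h1 : m+7-1 = m+6 := by omega
    have h2 : m+7-2 = m+5 := by omega
    have h3 : m+7-3 = m+4 := by omega
    rw [h1, h2, h3, add_assoc]
  have e4 : ∑ k ∈ Finset.Ico (m+4) (m+7), c k * c (m+7-k)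
      = c (m+4) * c 3 + c (m+5) * c 2 + c (m+6) * c 1 := by
    rw [Finset.sum_Ico_eq_sum_range]
    simp only [Nat.add_sub_add_left, show (7:ℕ)-4 = 3 from rfl]
    rw [Finset.sum_range_succ, Finset.sum_range_succ, Finset.sum_range_one]
    have : ∀ i : ℕ, m+7-(m+4+i) = 3-i := by intro i; omega
    rw [show m+4+0 = m+4 from rfl]
    rw [this 0, this 1, this 2, show m+4+1 = m+5 from by ring, show m+4+2 = m+6 from by ring]
  rw [e1, e2, e3, e4]; ring

lemma cval (c : ℕ → ℕ) (h1 : c 1 = 1)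
    (hrec : ∀ n : ℕ, 2 ≤ n → c n = (n - 1) * ∑ k ∈ Finset.Ico 1 n, c k * c (n - k)) :
    c 2 = 1 ∧ c 3 = 4 ∧ c 4 = 27 ∧ c 5 = 248 ∧ c 6 = 2830 := by
  have h2 : c 2 = 1 := by
    rw [hrec 2 (by norm_num), show Finset.Ico 1 2 = {1} from rfl, Finset.sum_singleton]
    norm_num [h1]
  have h3 : c 3 = 4 := by
    rw [hrec 3 (by norm_num), show Finset.Ico 1 3 = {1,2} from rfl,
      Finset.sum_insert (by decide), Finset.sum_singleton]
    norm_num [h1, h2]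
  have h4 : c 4 = 27 := by
    rw [hrec 4 (by norm_num), show Finset.Ico 1 4 = {1,2,3} from rfl,
      Finset.sum_insert (by decide), Finset.sum_insert (by decide), Finset.sum_singleton]
    norm_num [h1, h2, h3]
  have h5 : c 5 = 248 := by
    rw [hrec 5 (by norm_num), show Finset.Ico 1 5 = {1,2,3,4} from rfl,
      Finset.sum_insert (by decide), Finset.sum_insert (by decide),
      Finset.sum_insert (by decide), Finset.sum_singleton]
    norm_num [h1, h2, h3, h4]
  have h6 : c 6 = 2830 := by
    rw [hrec 6 (by norm_num), show Finset.Ico 1 6 = {1,2,3,4,5} from rfl,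
      Finset.sum_insert (by decide), Finset.sum_insert (by decide),
      Finset.sum_insert (by decide), Finset.sum_insert (by decide), Finset.sum_singleton]
    norm_num [h1, h2, h3, h4, h5]
  exact ⟨h2, h3, h4, h5, h6⟩

lemma clow (c : ℕ → ℕ) (h1 : c 1 = 1)
    (hrec : ∀ n : ℕ, 2 ≤ n → c n = (n - 1) * ∑ k ∈ Finset.Ico 1 n, c k * c (n - k)) :
    ∀ n, 3 ≤ n → 2*(n-1)*c (n-1) ≤ c n := by
  intro n hn
  obtain ⟨m, rfl⟩ : ∃ m, n = m + 3 := ⟨n - 3, by omega⟩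
  rw [hrec (m+3) (by omega)]
  have e1 : ∑ k ∈ Finset.Ico 1 (m+3), c k * c (m+3-k)
      = c 1 * c (m+2) + ((∑ k ∈ Finset.Ico 2 (m+2), c k * c (m+3-k)) + c (m+2) * c 1) := by
    rw [Finset.sum_eq_sum_Ico_succ_bot (by omega)]
    congr 1
    rw [show m+3 = m+2+1 from rfl, Finset.sum_Ico_succ_top (by omega),
      Nat.add_sub_cancel_left]
  rw [e1, h1]
  have : 2 * c (m+2) ≤ 1 * c (m + 2) + ((∑ k ∈ Finset.Ico 2 (m+2), c k * c (m+3-k)) + c (m+2) * 1) := by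
    have := Nat.zero_le (∑ k ∈ Finset.Ico 2 (m+2), c k * c (m+3-k))
    omega
  calc 2*(m+3-1)*c (m+3-1) = (m+2) * (2 * c (m+2)) := by rw [show m+3-1 = m+2 from by omega]; ring
    _ ≤ (m+2) * (1 * c (m + 2) + ((∑ k ∈ Finset.Ico 2 (m+2), c k * c (m+3-k)) + c (m+2) * 1)) :=
        Nat.mul_le_mul_left _ this
    _ = (m+3-1) * (1 * c (m + 2) + ((∑ k ∈ Finset.Ico 2 (m+2), c k * c (m+3-k)) + c (m+2) * 1)) := by
        rw [show m+3-1 = m+2 from by omega]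

lemma chain1 (c : ℕ → ℕ) (h1 : c 1 = 1)
    (hrec : ∀ n : ℕ, 2 ≤ n → c n = (n - 1) * ∑ k ∈ Finset.Ico 1 n, c k * c (n - k)) (m : ℕ) :
    2*(m+5)*c (m+5) ≤ c (m+6) := by
  have := clow c h1 hrec (m+6) (by omega)
  simpa using this

lemma chain2 (c : ℕ → ℕ) (h1 : c 1 = 1)
    (hrec : ∀ n : ℕ, 2 ≤ n → c n = (n - 1) * ∑ k ∈ Finset.Ico 1 n, c k * c (n - k)) (m : ℕ) :
    4*(m+5)*(m+4)*c (m+4) ≤ c (m+6) := by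
  have hA := chain1 c h1 hrec m
  have hB := clow c h1 hrec (m+5) (by omega)
  simp only [show m+5-1 = m+4 from by omega] at hB
  calc 4*(m+5)*(m+4)*c (m+4) = (m+5) * (2*(2*(m+4)*c (m+4))) := by ring
    _ ≤ (m+5) * (2*c (m+5)) := Nat.mul_le_mul_left _ (Nat.mul_le_mul_left _ hB)
    _ = 2*(m+5)*c (m+5) := by ring
    _ ≤ c (m+6) := hA

lemma chain3 (c : ℕ → ℕ) (h1 : c 1 = 1)
    (hrec : ∀ n : ℕ, 2 ≤ n → c n = (n - 1) * ∑ k ∈ Finset.Ico 1 n, c k * c (n - k)) (m : ℕ) :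
    8*(m+5)*(m+4)*(m+3)*c (m+3) ≤ c (m+6) := by
  have hA := chain2 c h1 hrec m
  have hB := clow c h1 hrec (m+4) (by omega)
  simp only [show m+4-1 = m+3 from by omega] at hB
  calc 8*(m+5)*(m+4)*(m+3)*c (m+3) = (4*(m+5)*(m+4)) * (2*(m+3)*c (m+3)) := by ring
    _ ≤ (4*(m+5)*(m+4)) * c (m+4) := Nat.mul_le_mul_left _ hB
    _ = 4*(m+5)*(m+4)*c (m+4) := by ring
    _ ≤ c (m+6) := hA

lemma pair (c : ℕ → ℕ) (h1 : c 1 = 1)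
    (hrec : ∀ n : ℕ, 2 ≤ n → c n = (n - 1) * ∑ k ∈ Finset.Ico 1 n, c k * c (n - k)) (n : ℕ) (hP : ∀ j, 2 ≤ j → j < n → c j ≤ 2*j*c (j-1)) :
    ∀ k, 4 ≤ k → 2*k ≤ n → c k * c (n-k) ≤ c 4 * c (n-4) := by
  intro k hk
  induction k, hk using Nat.le_induction with
  | base => intro _; exact le_refl _
  | succ k hk ih =>
    intro h2k
    have ihk := ih (by omega)
    refine le_trans ?_ ihk
    -- c (k+1) * c (n-(k+1)) ≤ c k * c (n-k)
    have hA : c (k+1) ≤ 2*(k+1)*c k := by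
      have := hP (k+1) (by omega) (by omega)
      simpa using this
    have hB : 2*(n-k-1)*c (n-k-1) ≤ c (n-k) := clow c h1 hrec (n-k) (by omega)
    have hkj : 2*(k+1) ≤ 2*(n-k-1) := by omega
    have key : (2*(n-k-1)) * (c (k+1) * c (n-(k+1))) ≤ (2*(n-k-1)) * (c k * c (n-k)) := by
      calc (2*(n-k-1)) * (c (k+1) * c (n-(k+1)))
          = c (k+1) * (2*(n-k-1) * c (n-k-1)) := by
            rw [show n-(k+1) = n-k-1 from by omega]; ring
        _ ≤ c (k+1) * c (n-k) := Nat.mul_le_mul_left _ hB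
        _ ≤ (2*(k+1)*c k) * c (n-k) := Nat.mul_le_mul_right _ hA
        _ ≤ (2*(n-k-1)*c k) * c (n-k) := Nat.mul_le_mul_right _ (Nat.mul_le_mul_right _ hkj)
        _ = (2*(n-k-1)) * (c k * c (n-k)) := by ring
    exact Nat.le_of_mul_le_mul_left key (by omega)

lemma sumUB (c : ℕ → ℕ) (h1 : c 1 = 1)
    (hrec : ∀ n : ℕ, 2 ≤ n → c n = (n - 1) * ∑ k ∈ Finset.Ico 1 n, c k * c (n - k)) (m : ℕ) (hP : ∀ j, 2 ≤ j → j < m+7 → c j ≤ 2*j*c (j-1)) :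
    (∑ k ∈ Finset.Ico 4 (m+4), c k * c (m+7-k)) ≤ m * (c 4 * c (m+3)) := by
  have hb : ∀ k ∈ Finset.Ico 4 (m+4), c k * c (m+7-k) ≤ c 4 * c (m+3) := by
    intro k hk
    simp only [Finset.mem_Ico] at hk
    have h47 : m+7-4 = m+3 := by omega
    by_cases h : 2*k ≤ m+7
    · have := pair c h1 hrec (m+7) hP k hk.1 h
      rwa [h47] at this
    · have h4 : 4 ≤ m+7-k := by omega
      have h2 : 2*(m+7-k) ≤ m+7 := by omega
      have := pair c h1 hrec (m+7) hP (m+7-k) h4 h2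
      rw [h47, show m+7-(m+7-k) = k from by omega] at this
      rw [mul_comm]
      exact this
  calc (∑ k ∈ Finset.Ico 4 (m+4), c k * c (m+7-k)) ≤ (Finset.Ico 4 (m+4)).card • (c 4 * c (m+3)) :=
        Finset.sum_le_card_nsmul _ _ _ hb
    _ = m * (c 4 * c (m+3)) := by rw [Nat.card_Ico, smul_eq_mul, show m+4-4 = m from by omega]

lemma sumFull (c : ℕ → ℕ) (h1 : c 1 = 1)
    (hrec : ∀ n : ℕ, 2 ≤ n → c n = (n - 1) * ∑ k ∈ Finset.Ico 1 n, c k * c (n - k)) (m : ℕ) (hP : ∀ j, 2 ≤ j → j < m+7 → c j ≤ 2*j*c (j-1)) :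
    (∑ k ∈ Finset.Ico 1 (m+7), c k * c (m+7-k))
      ≤ 2*c (m+6) + 2*c (m+5) + 8*c (m+4) + 27*(m*c (m+3)) := by
  obtain ⟨h2, h3, h4, h5, h6⟩ := cval c h1 hrec
  rw [sumDecomp c m, h1, h2, h3]
  have := sumUB c h1 hrec m hP
  rw [h4] at this
  nlinarith [this]

lemma sumLow (c : ℕ → ℕ) (h1 : c 1 = 1)
    (hrec : ∀ n : ℕ, 2 ≤ n → c n = (n - 1) * ∑ k ∈ Finset.Ico 1 n, c k * c (n - k)) (m : ℕ) :
    2*c (m+6) + 2*c (m+5) ≤ ∑ k ∈ Finset.Ico 1 (m+7), c k * c (m+7-k) := by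
  obtain ⟨h2, h3, h4, h5, h6⟩ := cval c h1 hrec
  rw [sumDecomp c m, h1, h2]
  nlinarith [Nat.zero_le (∑ k ∈ Finset.Ico 4 (m+4), c k * c (m+7-k)),
    Nat.zero_le (c 3 * c (m+4)), Nat.zero_le (c (m+4) * c 3)]

lemma cP (c : ℕ → ℕ) (h1 : c 1 = 1)
    (hrec : ∀ n : ℕ, 2 ≤ n → c n = (n - 1) * ∑ k ∈ Finset.Ico 1 n, c k * c (n - k)) : ∀ n, 2 ≤ n → c n ≤ 2*n*c (n-1) := by
  intro n
  induction n using Nat.strong_induction_on with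
  | _ n ih =>
    intro hn
    obtain ⟨h2, h3, h4, h5, h6⟩ := cval c h1 hrec
    by_cases h7 : n ≤ 6
    · interval_cases n <;> simp [h1, h2, h3, h4, h5, h6]
    · obtain ⟨m, rfl⟩ : ∃ m, n = m + 7 := ⟨n - 7, by omega⟩
      have hP : ∀ j, 2 ≤ j → j < m+7 → c j ≤ 2*j*c (j-1) := fun j hj hlt => ih j hlt hj
      have hS := sumFull c h1 hrec m hP
      have A2 := chain1 c h1 hrec m
      have A3 := chain2 c h1 hrec m
      have A4 := chain3 c h1 hrec m
      rw [hrec (m+7) (by omega), show m+7-1 = m+6 from by omega]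
      rw [← Nat.cast_le (α := ℝ)]
      push_cast
      have hSr := (Nat.cast_le (α := ℝ)).mpr hS; push_cast at hSr
      have A2r := (Nat.cast_le (α := ℝ)).mpr A2; push_cast at A2r
      have A3r := (Nat.cast_le (α := ℝ)).mpr A3; push_cast at A3r
      have A4r := (Nat.cast_le (α := ℝ)).mpr A4; push_cast at A4r
      set S : ℝ := ∑ k ∈ Finset.Ico 1 (m+7), (c k : ℝ) * ((c (m+7-k) : ℕ) : ℝ) with hSd
      set x : ℝ := (m : ℝ) with hx
      set a6 : ℝ := ((c (m+6) : ℕ) : ℝ) with ha6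
      set a5 : ℝ := ((c (m+5) : ℕ) : ℝ)
      set a4 : ℝ := ((c (m+4) : ℕ) : ℝ)
      set a3 : ℝ := ((c (m+3) : ℕ) : ℝ)
      have hxpos : (0:ℝ) ≤ x := Nat.cast_nonneg m
      have ha6p : (0:ℝ) ≤ a6 := Nat.cast_nonneg _
      have ha5p : (0:ℝ) ≤ a5 := Nat.cast_nonneg _
      have ha4p : (0:ℝ) ≤ a4 := Nat.cast_nonneg _
      have ha3p : (0:ℝ) ≤ a3 := Nat.cast_nonneg _
      have hSp : (0:ℝ) ≤ S := by rw [hSd]; positivity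
      -- goal : (x+6) * S ≤ 2*(x+7)*a6
      have hM : (0:ℝ) < 8*(x+5)*(x+4)*(x+3) := by positivity
      have hnum : (x+6)*(8*(x+4)*(x+3) + 16*(x+3) + 27*x) * a6
          ≤ 16*(x+5)*(x+4)*(x+3) * a6 := by
        nlinarith [mul_nonneg (mul_nonneg (mul_nonneg hxpos hxpos) hxpos) ha6p,
          mul_nonneg (mul_nonneg hxpos hxpos) ha6p, mul_nonneg hxpos ha6p]
      have big : (8*(x+5)*(x+4)*(x+3)) * ((x+6) * S) ≤ (8*(x+5)*(x+4)*(x+3)) * (2*(x+7)*a6) := by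
        nlinarith [mul_le_mul_of_nonneg_left hSr (by positivity : (0:ℝ) ≤ (8*(x+5)*(x+4)*(x+3))*(x+6)),
          mul_le_mul_of_nonneg_left A2r (by positivity : (0:ℝ) ≤ 8*(x+4)*(x+3)*(x+6)),
          mul_le_mul_of_nonneg_left A3r (by positivity : (0:ℝ) ≤ 16*(x+3)*(x+6)),
          mul_le_mul_of_nonneg_left A4r (by positivity : (0:ℝ) ≤ 27*x*(x+6)),
          hnum]
      exact le_of_mul_le_mul_left big hM

lemma cL (c : ℕ → ℕ) (h1 : c 1 = 1)
    (hrec : ∀ n : ℕ, 2 ≤ n → c n = (n - 1) * ∑ k ∈ Finset.Ico 1 n, c k * c (n - k)) (m : ℕ) : 2*(m+7)*c (m+6) ≤ c (m+7) + c (m+6) := by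
  have hS := sumLow c h1 hrec m
  have hP6 : c (m+6) ≤ 2*(m+6)*c (m+5) := by
    have := cP c h1 hrec (m+6) (by omega)
    simpa using this
  rw [hrec (m+7) (by omega), show m+7-1 = m+6 from by omega]
  have h1 : (m+6) * (2*c (m+6) + 2*c (m+5))
      ≤ (m+6) * ∑ k ∈ Finset.Ico 1 (m+7), c k * c (m+7-k) := Nat.mul_le_mul_left _ hS
  nlinarith [h1, hP6]

lemma cU (c : ℕ → ℕ) (h1 : c 1 = 1)
    (hrec : ∀ n : ℕ, 2 ≤ n → c n = (n - 1) * ∑ k ∈ Finset.Ico 1 n, c k * c (n - k)) (m : ℕ) :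
    (m+7) * c (m+7) + (m+7) * c (m+6) ≤ (2*(m+7)^2 + 40) * c (m+6) := by
  have hP : ∀ j, 2 ≤ j → j < m+7 → c j ≤ 2*j*c (j-1) := fun j hj _ => cP c h1 hrec j hj
  have hS := sumFull c h1 hrec m hP
  have A2 := chain1 c h1 hrec m
  have A3 := chain2 c h1 hrec m
  have A4 := chain3 c h1 hrec m
  rw [hrec (m+7) (by omega), show m+7-1 = m+6 from by omega]
  rw [← Nat.cast_le (α := ℝ)]
  push_cast
  have hSr := (Nat.cast_le (α := ℝ)).mpr hS; push_cast at hSr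
  have A2r := (Nat.cast_le (α := ℝ)).mpr A2; push_cast at A2r
  have A3r := (Nat.cast_le (α := ℝ)).mpr A3; push_cast at A3r
  have A4r := (Nat.cast_le (α := ℝ)).mpr A4; push_cast at A4r
  set S : ℝ := ∑ k ∈ Finset.Ico 1 (m+7), (c k : ℝ) * ((c (m+7-k) : ℕ) : ℝ) with hSd
  set x : ℝ := (m : ℝ) with hx
  set a6 : ℝ := ((c (m+6) : ℕ) : ℝ)
  set a5 : ℝ := ((c (m+5) : ℕ) : ℝ)
  set a4 : ℝ := ((c (m+4) : ℕ) : ℝ)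
  set a3 : ℝ := ((c (m+3) : ℕ) : ℝ)
  have hxpos : (0:ℝ) ≤ x := Nat.cast_nonneg m
  have ha6p : (0:ℝ) ≤ a6 := Nat.cast_nonneg _
  have ha5p : (0:ℝ) ≤ a5 := Nat.cast_nonneg _
  have ha4p : (0:ℝ) ≤ a4 := Nat.cast_nonneg _
  have ha3p : (0:ℝ) ≤ a3 := Nat.cast_nonneg _
  have hSp : (0:ℝ) ≤ S := by rw [hSd]; positivity
  -- goal : (x+7) * ((x+6) * S) + (x+7)*a6 ≤ (2*(x+7)^2+40) * a6
  have hM : (0:ℝ) < 8*(x+5)*(x+4)*(x+3) := by positivity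
  have hnum : (x+7)*(x+6)*(8*(x+4)*(x+3) + 16*(x+3) + 27*x) * a6
      ≤ 8*(x+47)*(x+5)*(x+4)*(x+3) * a6 := by
    nlinarith [mul_nonneg (mul_nonneg (mul_nonneg hxpos hxpos) hxpos) ha6p,
      mul_nonneg (mul_nonneg hxpos hxpos) ha6p, mul_nonneg hxpos ha6p, ha6p]
  have big : (8*(x+5)*(x+4)*(x+3)) * ((x+7) * ((x+6) * S) + (x+7)*a6)
      ≤ (8*(x+5)*(x+4)*(x+3)) * ((2*(x+7)^2+40) * a6) := by
    nlinarith [mul_le_mul_of_nonneg_left hSr (by positivity : (0:ℝ) ≤ (8*(x+5)*(x+4)*(x+3))*((x+7)*(x+6))),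
      mul_le_mul_of_nonneg_left A2r (by positivity : (0:ℝ) ≤ 8*(x+4)*(x+3)*((x+7)*(x+6))),
      mul_le_mul_of_nonneg_left A3r (by positivity : (0:ℝ) ≤ 16*(x+3)*((x+7)*(x+6))),
      mul_le_mul_of_nonneg_left A4r (by positivity : (0:ℝ) ≤ 27*x*((x+7)*(x+6))),
      hnum]
  have := le_of_mul_le_mul_left big hM
  linarith [this]

lemma fbounds (c : ℕ → ℕ) (h1 : c 1 = 1)
    (hrec : ∀ n : ℕ, 2 ≤ n → c n = (n - 1) * ∑ k ∈ Finset.Ico 1 n, c k * c (n - k)) (n : ℕ) (hn : 8 ≤ n) :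
    1/4 - 31/(n:ℝ) ≤ (n:ℝ)^2 * ((c (n-1) : ℝ)/(c n : ℝ) - 1/(2*(n:ℝ)))
    ∧ (n:ℝ)^2 * ((c (n-1) : ℝ)/(c n : ℝ) - 1/(2*(n:ℝ))) ≤ 1/4 + 31/(n:ℝ) := by
  have hL := cL c h1 hrec (n-7)
  have hU := cU c h1 hrec (n-7)
  rw [show n-7+7 = n from by omega, show n-7+6 = n-1 from by omega] at hL hU
  have hLr := (Nat.cast_le (α := ℝ)).mpr hL; push_cast at hLr
  have hUr := (Nat.cast_le (α := ℝ)).mpr hU; push_cast at hUr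
  have hapos : (1:ℝ) ≤ (c (n-1) : ℝ) := by exact_mod_cast cpos c h1 hrec (n-1) (by omega)
  have hbpos : (1:ℝ) ≤ (c n : ℝ) := by exact_mod_cast cpos c h1 hrec n (by omega)
  set N : ℝ := (n : ℝ) with hNd
  set a : ℝ := ((c (n-1) : ℕ) : ℝ) with had
  set b : ℝ := ((c n : ℕ) : ℝ) with hbd
  have hN : (8:ℝ) ≤ N := by rw [hNd]; exact_mod_cast hn
  have hN0 : (0:ℝ) < N := by linarith
  have ha : (0:ℝ) < a := by linarith
  have hb : (0:ℝ) < b := by linarith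
  -- hLr : 2*N*a ≤ b + a ; hUr : N*b + N*a ≤ (2*N^2+40)*a
  have key1 : 4*N^3*a ≤ (2*N^2+N+124)*b := by
    nlinarith [mul_le_mul_of_nonneg_left hLr (by nlinarith : (0:ℝ) ≤ 2*N^2+N+124),
      mul_nonneg (by nlinarith : (0:ℝ) ≤ 247*N-124) ha.le]
  have key2 : (2*N^2+N-124)*b ≤ 4*N^3*a := by
    have h2 : N*((2*N^2+N-124)*b) ≤ N*(4*N^3*a) := by
      nlinarith [mul_le_mul_of_nonneg_left hUr (by nlinarith : (0:ℝ) ≤ 2*N^2+N-124),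
        mul_nonneg (by nlinarith [sq_nonneg (N-1)] : (0:ℝ) ≤ 169*N^2-164*N+4960) ha.le]
    exact le_of_mul_le_mul_left h2 hN0
  have e1 : N^2*(a/b - 1/(2*N)) - (1/4+31/N) = (4*N^3*a - (2*N^2+N+124)*b)/(4*N*b) := by
    field_simp
    ring
  have e2 : N^2*(a/b - 1/(2*N)) - (1/4-31/N) = (4*N^3*a - (2*N^2+N-124)*b)/(4*N*b) := by
    field_simp
    ring
  constructor
  · have h := div_nonneg (by linarith : (0:ℝ) ≤ 4*N^3*a - (2*N^2+N-124)*b)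
      (by positivity : (0:ℝ) ≤ 4*N*b)
    rw [← e2] at h
    linarith
  · have h := div_nonpos_of_nonpos_of_nonneg (by linarith : 4*N^3*a - (2*N^2+N+124)*b ≤ 0)
      (by positivity : (0:ℝ) ≤ 4*N*b)
    rw [← e1] at h
    linarith

/-- with `c 1 = 1` and `c n = (n-1)·Σ_{k=1}^{n-1} c k·c (n-k)` for `n ≥ 2`,
one has `c_{n-1}/c_n = 1/(2n) + 1/(4n²) + O(1/n³)`; equivalently
`n²·(c_{n-1}/c_n - 1/(2n)) → 1/4` as `n → ∞`. -/
theorem stmt4 (c : ℕ → ℕ) (h1 : c 1 = 1)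
    (hrec : ∀ n : ℕ, 2 ≤ n → c n = (n - 1) * ∑ k ∈ Finset.Ico 1 n, c k * c (n - k)) :
    Tendsto
      (fun n : ℕ => (n : ℝ) ^ 2 * ((c (n - 1) : ℝ) / (c n : ℝ) - 1 / (2 * (n : ℝ))))
      atTop (nhds (1 / 4)) := by
  have t0 : Tendsto (fun n : ℕ => (31:ℝ)/(n:ℝ)) atTop (nhds 0) :=
    tendsto_const_div_atTop_nhds_zero_nat 31
  have tlow : Tendsto (fun n : ℕ => 1/4 - 31/(n:ℝ)) atTop (nhds (1/4)) := by
    have := (tendsto_const_nhds (x := (1/4:ℝ)) (f := (atTop : Filter ℕ))).sub t0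
    simpa using this
  have thigh : Tendsto (fun n : ℕ => 1/4 + 31/(n:ℝ)) atTop (nhds (1/4)) := by
    have := (tendsto_const_nhds (x := (1/4:ℝ)) (f := (atTop : Filter ℕ))).add t0
    simpa using this
  refine tendsto_of_tendsto_of_tendsto_of_le_of_le' tlow thigh ?_ ?_
  · filter_upwards [eventually_ge_atTop 8] with n hn using (fbounds c h1 hrec n hn).1
  · filter_upwards [eventually_ge_atTop 8] with n hn using (fbounds c h1 hrec n hn).2
end

section
/- Let c_n be the number of connected chord diagrams with n chords. For fixed j ≥ 2, the quantity (n-1) · Σ_{k=j}^{n-j} c_k c_{n-k} / c_n is O(1/n^{j-1}) as n → ∞. -/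
open scoped Classical

namespace ChordStmt

/-- Chord `p` has an outgoing edge to chord `q` in the oriented intersection graph. -/
def crosses (p q : ℕ × ℕ) : Prop := p.1 < q.1 ∧ q.1 < p.2 ∧ p.2 < q.2

/-- A finite set of pairs `(a,b)` with `a < b` and all endpoints distinct. -/
def IsMatching (D : Finset (ℕ × ℕ)) : Prop :=
  (∀ p ∈ D, p.1 < p.2) ∧
  ∀ p ∈ D, ∀ q ∈ D, p ≠ q → p.1 ≠ q.1 ∧ p.1 ≠ q.2 ∧ p.2 ≠ q.1 ∧ p.2 ≠ q.2

def points (D : Finset (ℕ × ℕ)) : Finset ℕ := D.biUnion fun p => {p.1, p.2}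

/-- A chord diagram with `n` chords: a perfect matching of `{1, …, 2n}`. -/
def IsDiagramOn (n : ℕ) (D : Finset (ℕ × ℕ)) : Prop :=
  IsMatching D ∧ points D = Finset.Icc 1 (2 * n)

def Step (D : Finset (ℕ × ℕ)) (a b : ℕ × ℕ) : Prop :=
  a ∈ D ∧ b ∈ D ∧ (crosses a b ∨ crosses b a)

def Reach (D : Finset (ℕ × ℕ)) (a b : ℕ × ℕ) : Prop :=
  Relation.ReflTransGen (Step D) a b

/-- The diagram is connected (its intersection graph is connected). -/
def ConnectedDiagram (D : Finset (ℕ × ℕ)) : Prop :=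
  D.Nonempty ∧ ∀ p ∈ D, ∀ q ∈ D, Reach D p q

/-- A chord is terminal if it has no outgoing edge in the oriented intersection graph. -/
def IsTerminal (D : Finset (ℕ × ℕ)) (p : ℕ × ℕ) : Prop :=
  p ∈ D ∧ ∀ q ∈ D, ¬ crosses p q

/-- The number of connected chord diagrams with `n` chords. -/
noncomputable def c (n : ℕ) : ℕ :=
  Set.ncard {D : Finset (ℕ × ℕ) | IsDiagramOn n D ∧ ConnectedDiagram D}

/-- The root chord: the chord with the smallest first endpoint. -/
noncomputable def rootChord (D : Finset (ℕ × ℕ)) : ℕ × ℕ :=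
  if h : ∃ p ∈ D, ∀ q ∈ D, p.1 ≤ q.1 then h.choose else (0, 0)

lemma rootChord_mem {D : Finset (ℕ × ℕ)} (h : D.Nonempty) : rootChord D ∈ D := by
  have hex : ∃ p ∈ D, ∀ q ∈ D, p.1 ≤ q.1 := by
    obtain ⟨p, hp, hmin⟩ := D.exists_min_image Prod.fst h
    exact ⟨p, hp, hmin⟩
  rw [rootChord, dif_pos hex]
  exact hex.choose_spec.1

/-- The connected component of the chord `p` in the diagram `D`. -/
noncomputable def componentOf (D : Finset (ℕ × ℕ)) (p : ℕ × ℕ) : Finset (ℕ × ℕ) :=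
  D.filter fun q => Reach D p q

/-- The list of chords of `D` in intersection order: the root chord first, then
recursively the chords of the connected components of `D` minus the root chord,
components ordered by first vertex (equivalently: repeatedly split off the component
of the current root chord). -/
noncomputable def interOrder (D : Finset (ℕ × ℕ)) : List (ℕ × ℕ) :=
  if h : D.Nonempty then
    if hK : componentOf D (rootChord D) = D then
      rootChord D :: interOrder (D.erase (rootChord D))
    else
      interOrder (componentOf D (rootChord D)) ++
        interOrder (D \ componentOf D (rootChord D))
  else []
termination_by D.card
decreasing_by
  · exact Finset.card_erase_lt_of_mem (rootChord_mem h)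
  · exact Finset.card_lt_card
      (Finset.ssubset_iff_subset_ne.mpr ⟨Finset.filter_subset _ _, hK⟩)
  · exact Finset.card_lt_card
      (Finset.sdiff_ssubset (Finset.filter_subset _ _)
        ⟨rootChord D, Finset.mem_filter.mpr ⟨rootChord_mem h, Relation.ReflTransGen.refl⟩⟩)

/-- `b(C)`: the (1-based) index of the first terminal chord in the intersection order. -/
noncomputable def bIndex (D : Finset (ℕ × ℕ)) : ℕ :=
  (interOrder D).findIdx (fun p => decide (IsTerminal D p)) + 1

/-- `b_{n,k}`: the number of connected chord diagrams `C` with `n` chords and `b(C) ≥ n - k`. -/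
noncomputable def bCount (n k : ℕ) : ℕ :=
  Set.ncard {D : Finset (ℕ × ℕ) |
    IsDiagramOn n D ∧ ConnectedDiagram D ∧ n - k ≤ bIndex D}

/-- The terminal chords of `D` are exactly the last `k` chords in intersection order. -/
def TerminalExactlyLast (D : Finset (ℕ × ℕ)) (k : ℕ) : Prop :=
  ∀ i : Fin (interOrder D).length,
    IsTerminal D ((interOrder D).get i) ↔ (interOrder D).length - k ≤ (i : ℕ)

/-- `o_{n,k}`: connected diagrams with `n` chords whose terminal chords are exactly
the last `k` chords in intersection order. -/
noncomputable def oCount (n k : ℕ) : ℕ :=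
  Set.ncard {D : Finset (ℕ × ℕ) |
    IsDiagramOn n D ∧ ConnectedDiagram D ∧ TerminalExactlyLast D k}

end ChordStmt

namespace ChordStmt

open Asymptotics Filter

set_option maxHeartbeats 1000000

-- ===== infrastructure =====

lemma mem_points_iff {D : Finset (ℕ × ℕ)} {x : ℕ} :
    x ∈ points D ↔ ∃ p ∈ D, p.1 = x ∨ p.2 = x := by
  simp [points, Finset.mem_biUnion, eq_comm]

lemma fst_mem_points {D : Finset (ℕ × ℕ)} {p : ℕ × ℕ} (hp : p ∈ D) : p.1 ∈ points D :=
  mem_points_iff.2 ⟨p, hp, Or.inl rfl⟩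

lemma snd_mem_points {D : Finset (ℕ × ℕ)} {p : ℕ × ℕ} (hp : p ∈ D) : p.2 ∈ points D :=
  mem_points_iff.2 ⟨p, hp, Or.inr rfl⟩

noncomputable def Mfin (n : ℕ) : Finset (Finset (ℕ × ℕ)) :=
  ((Finset.Icc 1 (2*n) ×ˢ Finset.Icc 1 (2*n)).powerset).filter (fun D => IsDiagramOn n D)

noncomputable def Dfin (n : ℕ) : Finset (Finset (ℕ × ℕ)) :=
  ((Finset.Icc 1 (2*n) ×ˢ Finset.Icc 1 (2*n)).powerset).filter
    (fun D => IsDiagramOn n D ∧ ConnectedDiagram D)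

lemma subset_prod {n : ℕ} {D : Finset (ℕ × ℕ)} (h : IsDiagramOn n D) :
    D ⊆ Finset.Icc 1 (2*n) ×ˢ Finset.Icc 1 (2*n) := by
  intro p hp
  rw [Finset.mem_product, ← h.2]
  exact ⟨fst_mem_points hp, snd_mem_points hp⟩

lemma mem_Mfin {n : ℕ} {D : Finset (ℕ × ℕ)} : D ∈ Mfin n ↔ IsDiagramOn n D := by
  simp only [Mfin, Finset.mem_filter, Finset.mem_powerset]
  exact ⟨fun h => h.2, fun h => ⟨subset_prod h, h⟩⟩

lemma mem_Dfin {n : ℕ} {D : Finset (ℕ × ℕ)} :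
    D ∈ Dfin n ↔ IsDiagramOn n D ∧ ConnectedDiagram D := by
  simp only [Dfin, Finset.mem_filter, Finset.mem_powerset]
  exact ⟨fun h => h.2, fun h => ⟨subset_prod h.1, h⟩⟩

lemma c_eq_card (n : ℕ) : c n = (Dfin n).card := by
  rw [c]
  have : {D : Finset (ℕ × ℕ) | IsDiagramOn n D ∧ ConnectedDiagram D} = ↑(Dfin n) := by
    ext D; simp [mem_Dfin]
  rw [this, Set.ncard_coe_finset]

lemma Dfin_subset_Mfin (n : ℕ) : Dfin n ⊆ Mfin n := fun D hD =>
  mem_Mfin.2 (mem_Dfin.1 hD).1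

-- ===== shifts =====

def shiftUp (a x : ℕ) : ℕ := if x < a then x else x + 1
def shiftDown (a x : ℕ) : ℕ := if x < a then x else x - 1
def pmap (f : ℕ → ℕ) (p : ℕ × ℕ) : ℕ × ℕ := (f p.1, f p.2)

lemma shiftUp_strictMono (a : ℕ) : StrictMono (shiftUp a) := by
  intro x y h; unfold shiftUp; split <;> split <;> omega

lemma shiftUp_ne (a x : ℕ) : shiftUp a x ≠ a := by unfold shiftUp; split <;> omega

lemma shiftDown_shiftUp {a x : ℕ} (h : x ≠ a) : shiftUp a (shiftDown a x) = x := by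
  unfold shiftUp shiftDown; split_ifs <;> omega

lemma pmap_injective {f : ℕ → ℕ} (hf : Function.Injective f) : Function.Injective (pmap f) := by
  intro p q h
  have h1 := congrArg Prod.fst h; have h2 := congrArg Prod.snd h
  simp only [pmap] at h1 h2
  exact Prod.ext (hf h1) (hf h2)

lemma points_image (f : ℕ → ℕ) (D : Finset (ℕ × ℕ)) :
    points (D.image (pmap f)) = (points D).image f := by
  ext x
  simp only [mem_points_iff, Finset.mem_image, pmap]
  constructor
  · rintro ⟨p, ⟨q, hq, rfl⟩, h⟩
    rcases h with h | h
    · exact ⟨q.1, ⟨q, hq, Or.inl rfl⟩, h⟩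
    · exact ⟨q.2, ⟨q, hq, Or.inr rfl⟩, h⟩
  · rintro ⟨y, ⟨p, hp, h | h⟩, rfl⟩
    · exact ⟨(f p.1, f p.2), ⟨p, hp, rfl⟩, Or.inl (congrArg f h)⟩
    · exact ⟨(f p.1, f p.2), ⟨p, hp, rfl⟩, Or.inr (congrArg f h)⟩

/-- image of a matching under a map strictly monotone on the points. -/
lemma isMatching_image {D : Finset (ℕ × ℕ)} {f : ℕ → ℕ} (hM : IsMatching D)
    (hf : ∀ x ∈ points D, ∀ y ∈ points D, x < y → f x < f y) :
    IsMatching (D.image (pmap f)) := by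
  have hinj : ∀ x ∈ points D, ∀ y ∈ points D, f x = f y → x = y := by
    intro x hx y hy hxy
    rcases lt_trichotomy x y with h | h | h
    · exact absurd hxy (ne_of_lt (hf x hx y hy h))
    · exact h
    · exact absurd hxy.symm (ne_of_lt (hf y hy x hx h))
  constructor
  · rintro p hp
    rcases Finset.mem_image.1 hp with ⟨q, hq, rfl⟩
    exact hf q.1 (fst_mem_points hq) q.2 (snd_mem_points hq) (hM.1 q hq)
  · rintro p hp q hq hne
    rcases Finset.mem_image.1 hp with ⟨p', hp', rfl⟩
    rcases Finset.mem_image.1 hq with ⟨q', hq', rfl⟩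
    have hne' : p' ≠ q' := by rintro rfl; exact hne rfl
    obtain ⟨h1, h2, h3, h4⟩ := hM.2 p' hp' q' hq' hne'
    refine ⟨?_, ?_, ?_, ?_⟩ <;> simp only [pmap] <;> intro h
    · exact h1 (hinj _ (fst_mem_points hp') _ (fst_mem_points hq') h)
    · exact h2 (hinj _ (fst_mem_points hp') _ (snd_mem_points hq') h)
    · exact h3 (hinj _ (snd_mem_points hp') _ (fst_mem_points hq') h)
    · exact h4 (hinj _ (snd_mem_points hp') _ (snd_mem_points hq') h)

lemma crosses_map {f : ℕ → ℕ} (hf : StrictMono f) {p q : ℕ × ℕ} (h : crosses p q) :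
    crosses (pmap f p) (pmap f q) :=
  ⟨hf h.1, hf h.2.1, hf h.2.2⟩



-- ===== insertion =====

noncomputable def insChord (m a : ℕ) (D : Finset (ℕ × ℕ)) : Finset (ℕ × ℕ) :=
  insert (a, 2*m) (D.image (pmap (shiftUp a)))

lemma image_shiftUp_Icc {a N : ℕ} (h1 : 1 ≤ a) (h2 : a ≤ N + 1) :
    insert a ((Finset.Icc 1 N).image (shiftUp a)) = Finset.Icc 1 (N+1) := by
  ext x
  simp only [Finset.mem_insert, Finset.mem_image, Finset.mem_Icc]
  constructor
  · rintro (rfl | ⟨y, hy, rfl⟩)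
    · omega
    · unfold shiftUp; split <;> omega
  · intro hx
    rcases eq_or_ne x a with rfl | hne
    · exact Or.inl rfl
    · rcases lt_or_gt_of_ne hne with h | h
      · exact Or.inr ⟨x, by omega, if_pos h⟩
      · refine Or.inr ⟨x - 1, by omega, ?_⟩
        unfold shiftUp; split <;> omega

lemma points_insChord {m a : ℕ} {D : Finset (ℕ × ℕ)} (hm : 1 ≤ m)
    (hpts : points D = Finset.Icc 1 (2*(m-1))) (ha : 1 ≤ a) (ha' : a ≤ 2*m - 1) :
    points (insChord m a D) = Finset.Icc 1 (2*m) := by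
  have hN : 2*(m-1) + 1 = 2*m - 1 := by omega
  rw [insChord, points, Finset.biUnion_insert]
  have : ((D.image (pmap (shiftUp a))).biUnion fun p => {p.1, p.2}) =
      points (D.image (pmap (shiftUp a))) := rfl
  rw [this, points_image, hpts]
  have key : insert a ((Finset.Icc 1 (2*(m-1))).image (shiftUp a)) = Finset.Icc 1 (2*m-1) := by
    rw [image_shiftUp_Icc ha (by omega)]; congr 1
  have : ({(a, 2*m).1, (a, 2*m).2} : Finset ℕ) = {a, 2*m} := rfl
  rw [this]
  have : ({a, 2*m} : Finset ℕ) ∪ (Finset.Icc 1 (2*(m-1))).image (shiftUp a)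
      = insert (2*m) (insert a ((Finset.Icc 1 (2*(m-1))).image (shiftUp a))) := by
    ext x
    simp only [Finset.mem_insert, Finset.mem_union, Finset.mem_singleton]
    tauto
  rw [this, key]
  ext x; simp only [Finset.mem_insert, Finset.mem_Icc]; omega

lemma point_lt_of_mem {m : ℕ} {D : Finset (ℕ × ℕ)}
    (hpts : points D = Finset.Icc 1 (2*(m-1))) {a x : ℕ}
    (hx : x ∈ points (D.image (pmap (shiftUp a)))) : x ≠ a ∧ x ≤ 2*m - 1 := by
  rw [points_image, hpts] at hx
  rcases Finset.mem_image.1 hx with ⟨y, hy, rfl⟩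
  rw [Finset.mem_Icc] at hy
  refine ⟨shiftUp_ne a y, ?_⟩
  unfold shiftUp; split <;> omega

lemma isMatching_insChord {m a : ℕ} {D : Finset (ℕ × ℕ)} (hm : 1 ≤ m)
    (hM : IsMatching D) (hpts : points D = Finset.Icc 1 (2*(m-1))) (ha : 1 ≤ a)
    (ha2 : a ≤ 2*m - 1) :
    IsMatching (insChord m a D) := by
  have hE : IsMatching (D.image (pmap (shiftUp a))) :=
    isMatching_image hM (fun x _ y _ h => shiftUp_strictMono a h)
  have hkey : ∀ q ∈ D.image (pmap (shiftUp a)), q.1 ≠ a ∧ q.1 ≠ 2*m ∧ q.2 ≠ a ∧ q.2 ≠ 2*m := by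
    intro q hq
    have h1 := point_lt_of_mem (a := a) hpts (fst_mem_points hq)
    have h2 := point_lt_of_mem (a := a) hpts (snd_mem_points hq)
    omega
  constructor
  · intro p hp
    rcases Finset.mem_insert.1 hp with rfl | hp'
    · show a < 2*m; omega
    · exact hE.1 p hp'
  · intro p hp q hq hne
    rcases Finset.mem_insert.1 hp with rfl | hp' <;> rcases Finset.mem_insert.1 hq with rfl | hq'
    · exact absurd rfl hne
    · have := hkey q hq'; simp only [Prod.fst, Prod.snd] at *; omega
    · have := hkey p hp'; simp only [Prod.fst, Prod.snd] at *; omega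
    · exact hE.2 p hp' q hq' hne

lemma step_symm {D : Finset (ℕ × ℕ)} {p q : ℕ × ℕ} (h : Step D p q) : Step D q p :=
  ⟨h.2.1, h.1, h.2.2.symm⟩

lemma exists_straddle {D : Finset (ℕ × ℕ)} {N a : ℕ} (hM : IsMatching D)
    (hC : ConnectedDiagram D) (hpts : points D = Finset.Icc 1 N)
    (hN : 2 ≤ N) (ha : 2 ≤ a) (ha' : a ≤ N) : ∃ p ∈ D, p.1 < a ∧ a ≤ p.2 := by
  by_contra hcon
  push_neg at hcon
  have hsep : ∀ p ∈ D, p.1 < a → p.2 < a := by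
    intro p hp h1
    by_contra h2
    exact absurd (hcon p hp h1) (by omega)
  have hbd : ∀ p ∈ D, 1 ≤ p.1 ∧ p.2 ≤ N := by
    intro p hp
    have h1 := fst_mem_points hp; have h2 := snd_mem_points hp
    rw [hpts, Finset.mem_Icc] at h1 h2; omega
  -- chord containing 1
  have h1pt : (1 : ℕ) ∈ points D := by rw [hpts, Finset.mem_Icc]; omega
  obtain ⟨p1, hp1, hp1e⟩ := mem_points_iff.1 h1pt
  have hp1' : p1.1 = 1 := by
    rcases hp1e with h | h
    · exact h
    · exfalso; have := hM.1 p1 hp1; have := (hbd p1 hp1).1; omega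
  -- chord containing N
  have hNpt : N ∈ points D := by rw [hpts, Finset.mem_Icc]; omega
  obtain ⟨q, hq, hqe⟩ := mem_points_iff.1 hNpt
  have hq' : q.2 = N := by
    rcases hqe with h | h
    · exfalso; have := hM.1 q hq; have := (hbd q hq).2; omega
    · exact h
  -- reach preserves "right endpoint < a"
  have hmono : ∀ x y : ℕ × ℕ, Reach D x y → x.2 < a → y.2 < a := by
    intro x y hr
    induction hr with
    | refl => exact id
    | tail _ hstep ih =>
      intro hx
      have hm2 := ih hx
      rcases hstep.2.2 with hc | hc
      · rcases hc with ⟨_, h2, _⟩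
        exact hsep _ hstep.2.1 (by omega)
      · rcases hc with ⟨_, _, h3⟩
        omega
  have hreach := hC.2 p1 hp1 q hq
  have : p1.2 < a := hsep p1 hp1 (by omega)
  have := hmono p1 q hreach this
  omega

lemma connected_insChord {m a : ℕ} {D : Finset (ℕ × ℕ)} (hm : 2 ≤ m)
    (hM : IsMatching D) (hC : ConnectedDiagram D)
    (hpts : points D = Finset.Icc 1 (2*(m-1))) (ha : 2 ≤ a) (ha' : a ≤ 2*m - 2) :
    ConnectedDiagram (insChord m a D) := by
  set σ := shiftUp a with hσ
  have hbd : ∀ p ∈ D, 1 ≤ p.1 ∧ p.2 ≤ 2*(m-1) := by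
    intro p hp
    have h1 := fst_mem_points hp; have h2 := snd_mem_points hp
    rw [hpts, Finset.mem_Icc] at h1 h2; omega
  have hstep : ∀ p q, Step D p q → Step (insChord m a D) (pmap σ p) (pmap σ q) := by
    intro p q h
    refine ⟨Finset.mem_insert_of_mem (Finset.mem_image_of_mem _ h.1),
      Finset.mem_insert_of_mem (Finset.mem_image_of_mem _ h.2.1), ?_⟩
    rcases h.2.2 with hc | hc
    · exact Or.inl (crosses_map (shiftUp_strictMono a) hc)
    · exact Or.inr (crosses_map (shiftUp_strictMono a) hc)
  have hlift : ∀ p ∈ D, ∀ q ∈ D, Reach (insChord m a D) (pmap σ p) (pmap σ q) := by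
    intro p hp q hq
    exact Relation.ReflTransGen.lift (pmap σ) hstep _ _ (hC.2 p hp q hq)
  obtain ⟨s, hs, hs1, hs2⟩ := exists_straddle hM hC hpts (by omega) ha (by omega)
  have hsmem : pmap σ s ∈ insChord m a D :=
    Finset.mem_insert_of_mem (Finset.mem_image_of_mem _ hs)
  have hnewmem : (a, 2*m) ∈ insChord m a D := Finset.mem_insert_self _ _
  have hcross : crosses (pmap σ s) (a, 2*m) := by
    have hb := hbd s hs
    refine ⟨?_, ?_, ?_⟩ <;> simp only [pmap, hσ] <;> unfold shiftUp <;> split <;> omega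
  have hstep2 : Step (insChord m a D) (pmap σ s) (a, 2*m) := ⟨hsmem, hnewmem, Or.inl hcross⟩
  have hto : ∀ q ∈ insChord m a D, Reach (insChord m a D) q (a, 2*m) := by
    intro q hq
    rcases Finset.mem_insert.1 hq with rfl | hq'
    · exact Relation.ReflTransGen.refl
    · rcases Finset.mem_image.1 hq' with ⟨p, hp, rfl⟩
      exact (hlift p hp s hs).tail hstep2
  have hfrom : ∀ q ∈ insChord m a D, Reach (insChord m a D) (a, 2*m) q := by
    intro q hq
    rcases Finset.mem_insert.1 hq with rfl | hq'
    · exact Relation.ReflTransGen.refl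
    · rcases Finset.mem_image.1 hq' with ⟨p, hp, rfl⟩
      exact (Relation.ReflTransGen.single (step_symm hstep2)).trans (hlift s hs p hp)
  exact ⟨⟨(a, 2*m), hnewmem⟩, fun p hp q hq => (hto p hp).trans (hfrom q hq)⟩

lemma insChord_mem_Dfin {m a : ℕ} {D : Finset (ℕ × ℕ)} (hm : 2 ≤ m)
    (hD : D ∈ Dfin (m-1)) (ha : 2 ≤ a) (ha' : a ≤ 2*m - 2) :
    insChord m a D ∈ Dfin m := by
  obtain ⟨⟨hM, hpts⟩, hC⟩ := mem_Dfin.1 hD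
  have hpts' : points D = Finset.Icc 1 (2*(m-1)) := hpts
  exact mem_Dfin.2 ⟨⟨isMatching_insChord (by omega) hM hpts' (by omega) (by omega),
    points_insChord (by omega) hpts' (by omega) (by omega)⟩,
    connected_insChord hm hM hC hpts' ha ha'⟩

lemma snd_eq_of_mem_insChord {m a : ℕ} {D : Finset (ℕ × ℕ)}
    (hpts : points D = Finset.Icc 1 (2*(m-1))) {t : ℕ}
    (h : (t, 2*m) ∈ insChord m a D) (hm : 1 ≤ m) : t = a := by
  rcases Finset.mem_insert.1 h with h' | h'
  · exact (Prod.ext_iff.1 h').1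
  · exfalso
    have := point_lt_of_mem (a := a) hpts (snd_mem_points h')
    simp only [Prod.snd] at this; omega

lemma insChord_injOn {m : ℕ} (hm : 2 ≤ m) {a a' : ℕ} {D D' : Finset (ℕ × ℕ)}
    (hD : D ∈ Dfin (m-1)) (hD' : D' ∈ Dfin (m-1))
    (heq : insChord m a D = insChord m a' D') : a = a' ∧ D = D' := by
  have hpts : points D = Finset.Icc 1 (2*(m-1)) := (mem_Dfin.1 hD).1.2
  have hpts' : points D' = Finset.Icc 1 (2*(m-1)) := (mem_Dfin.1 hD').1.2
  have haa : a = a' := by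
    have : (a, 2*m) ∈ insChord m a' D' := heq ▸ Finset.mem_insert_self _ _
    exact snd_eq_of_mem_insChord hpts' this (by omega)
  subst haa
  refine ⟨rfl, ?_⟩
  have himg : D.image (pmap (shiftUp a)) = D'.image (pmap (shiftUp a)) := by
    ext q
    constructor
    · intro hq
      have hq2 : q ∈ insChord m a D' := heq ▸ Finset.mem_insert_of_mem hq
      rcases Finset.mem_insert.1 hq2 with rfl | h'
      · exfalso
        have := point_lt_of_mem (a := a) hpts (snd_mem_points hq)
        simp only [Prod.snd] at this; omega
      · exact h'
    · intro hq
      have hq2 : q ∈ insChord m a D := heq ▸ Finset.mem_insert_of_mem hq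
      rcases Finset.mem_insert.1 hq2 with rfl | h'
      · exfalso
        have := point_lt_of_mem (a := a) hpts' (snd_mem_points hq)
        simp only [Prod.snd] at this; omega
      · exact h'
  exact Finset.image_injective (pmap_injective (shiftUp_strictMono a).injective) himg

lemma step_c {m : ℕ} (hm : 2 ≤ m) : (2*m - 3) * c (m-1) ≤ c m := by
  rw [c_eq_card, c_eq_card]
  have := Finset.card_le_card_of_injOn (f := fun x : ℕ × Finset (ℕ × ℕ) => insChord m x.1 x.2)
    (s := (Finset.Icc 2 (2*m-2)) ×ˢ Dfin (m-1)) (t := Dfin m)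
    (by
      rintro ⟨a, D⟩ hx
      rw [Finset.mem_coe, Finset.mem_product, Finset.mem_Icc] at hx
      exact insChord_mem_Dfin hm hx.2 hx.1.1 hx.1.2)
    (by
      rintro ⟨a, D⟩ hx ⟨a', D'⟩ hy heq
      rw [Finset.mem_coe, Finset.mem_product] at hx hy
      obtain ⟨h1, h2⟩ := insChord_injOn hm hx.2 hy.2 heq
      exact Prod.ext h1 h2)
  rw [Finset.card_product, Nat.card_Icc] at this
  calc (2*m-3) * (Dfin (m-1)).card = (2*m-2+1-2) * (Dfin (m-1)).card := by congr 1
  _ ≤ (Dfin m).card := this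

-- ===== upper bound: number of matchings =====

def oddFac (k : ℕ) : ℕ := ∏ i ∈ Finset.range k, (2*i+1)

lemma Mfin_zero : (Mfin 0).card ≤ 1 := by
  have : Mfin 0 ⊆ {∅} := by
    intro D hD
    have h := mem_Mfin.1 hD
    rw [Finset.mem_singleton]
    by_contra hne
    obtain ⟨p, hp⟩ := Finset.nonempty_of_ne_empty hne
    have := fst_mem_points hp
    rw [h.2] at this
    simp at this
  exact le_trans (Finset.card_le_card this) (by simp)

lemma Mfin_succ (k : ℕ) : (Mfin (k+1)).card ≤ (2*k+1) * (Mfin k).card := by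
  have hsub : Mfin (k+1) ⊆
      ((Finset.Icc 1 (2*k+1)) ×ˢ Mfin k).image (fun x => insChord (k+1) x.1 x.2) := by
    intro D hD
    obtain ⟨hM, hpts⟩ := mem_Mfin.1 hD
    -- the chord containing the top point 2k+2
    have htop : 2*(k+1) ∈ points D := by rw [hpts, Finset.mem_Icc]; omega
    obtain ⟨p, hp, hpe⟩ := mem_points_iff.1 htop
    have hbd : ∀ q ∈ D, 1 ≤ q.1 ∧ q.1 ≤ 2*(k+1) ∧ 1 ≤ q.2 ∧ q.2 ≤ 2*(k+1) := by
      intro q hq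
      have h1 := fst_mem_points hq; have h2 := snd_mem_points hq
      rw [hpts, Finset.mem_Icc] at h1 h2; omega
    have hp2 : p.2 = 2*(k+1) := by
      rcases hpe with h | h
      · exfalso; have := hM.1 p hp; have := (hbd p hp).2.2.2; omega
      · exact h
    set a := p.1 with ha
    have haa : 1 ≤ a ∧ a ≤ 2*k+1 := by
      have := hM.1 p hp; have := (hbd p hp).1; omega
    -- points of the erased diagram
    have hepts : ∀ x, x ∈ points (D.erase p) ↔
        (1 ≤ x ∧ x ≤ 2*(k+1) ∧ x ≠ a ∧ x ≠ 2*(k+1)) := by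
      intro x
      constructor
      · intro hx
        obtain ⟨q, hq, hqe⟩ := mem_points_iff.1 hx
        have hq' := Finset.mem_of_mem_erase hq
        have hne : q ≠ p := Finset.ne_of_mem_erase hq
        obtain ⟨d1, d2, d3, d4⟩ := hM.2 q hq' p hp hne
        have := hbd q hq'
        rcases hqe with h | h <;> subst h
        · refine ⟨by omega, by omega, ?_, ?_⟩ <;> omega
        · refine ⟨by omega, by omega, ?_, ?_⟩ <;> omega
      · rintro ⟨h1, h2, h3, h4⟩
        have : x ∈ points D := by rw [hpts, Finset.mem_Icc]; omega
        obtain ⟨q, hq, hqe⟩ := mem_points_iff.1 this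
        have hne : q ≠ p := by
          rintro rfl
          rcases hqe with h | h
          · exact h3 h.symm
          · exact h4 (by omega)
        exact mem_points_iff.2 ⟨q, Finset.mem_erase_of_ne_of_mem hne hq, hqe⟩
    set D0 := (D.erase p).image (pmap (shiftDown a)) with hD0
    have hmono : ∀ x ∈ points (D.erase p), ∀ y ∈ points (D.erase p), x < y →
        shiftDown a x < shiftDown a y := by
      intro x hx y hy hxy
      have hx' := (hepts x).1 hx; have hy' := (hepts y).1 hy
      unfold shiftDown; split_ifs <;> omega
    have hM0 : IsMatching D0 := isMatching_image
      ⟨fun q hq => hM.1 q (Finset.mem_of_mem_erase hq),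
       fun q hq r hr h => hM.2 q (Finset.mem_of_mem_erase hq) r (Finset.mem_of_mem_erase hr) h⟩
      hmono
    have hpts0 : points D0 = Finset.Icc 1 (2*k) := by
      rw [hD0, points_image]
      ext y
      simp only [Finset.mem_image, Finset.mem_Icc]
      constructor
      · rintro ⟨x, hx, rfl⟩
        have := (hepts x).1 hx
        unfold shiftDown; split <;> omega
      · intro hy
        rcases lt_or_ge y a with h | h
        · refine ⟨y, (hepts y).2 (by omega), if_pos h⟩
        · refine ⟨y + 1, (hepts (y+1)).2 (by omega), ?_⟩
          unfold shiftDown; split <;> omega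
    have hD0M : D0 ∈ Mfin k := mem_Mfin.2 ⟨hM0, hpts0⟩
    -- reconstruction
    have hrec : insChord (k+1) a D0 = D := by
      rw [insChord, hD0, Finset.image_image]
      have himg : (D.erase p).image (pmap (shiftUp a) ∘ pmap (shiftDown a)) = D.erase p := by
        have : ∀ q ∈ D.erase p, (pmap (shiftUp a) ∘ pmap (shiftDown a)) q = q := by
          intro q hq
          have h1 := (hepts q.1).1 (fst_mem_points hq)
          have h2 := (hepts q.2).1 (snd_mem_points hq)
          show (shiftUp a (shiftDown a q.1), shiftUp a (shiftDown a q.2)) = q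
          rw [shiftDown_shiftUp h1.2.2.1, shiftDown_shiftUp h2.2.2.1]
        rw [Finset.image_congr (g := id) (fun q hq => this q hq), Finset.image_id]
      rw [himg]
      have hpeq : p = (a, 2*(k+1)) := Prod.ext rfl hp2
      rw [← hpeq, Finset.insert_erase hp]
    refine Finset.mem_image.2 ⟨(a, D0), ?_, hrec⟩
    rw [Finset.mem_product, Finset.mem_Icc]
    exact ⟨haa, hD0M⟩
  calc (Mfin (k+1)).card ≤ _ := Finset.card_le_card hsub
  _ ≤ ((Finset.Icc 1 (2*k+1)) ×ˢ Mfin k).card := Finset.card_image_le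
  _ = (2*k+1) * (Mfin k).card := by rw [Finset.card_product, Nat.card_Icc]; congr 1

lemma Mfin_le_oddFac (k : ℕ) : (Mfin k).card ≤ oddFac k := by
  induction k with
  | zero => simpa [oddFac] using Mfin_zero
  | succ k ih =>
    calc (Mfin (k+1)).card ≤ (2*k+1) * (Mfin k).card := Mfin_succ k
    _ ≤ (2*k+1) * oddFac k := Nat.mul_le_mul_left _ ih
    _ = oddFac (k+1) := by rw [oddFac, oddFac, Finset.prod_range_succ, Nat.mul_comm]

lemma c_le_oddFac (k : ℕ) : c k ≤ oddFac k := by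
  rw [c_eq_card]
  exact le_trans (Finset.card_le_card (Dfin_subset_Mfin k)) (Mfin_le_oddFac k)

-- ===== positivity and chain bound =====

lemma one_le_c_one : 1 ≤ c 1 := by
  rw [c_eq_card]
  refine Finset.card_pos.2 ⟨{(1, 2)}, mem_Dfin.2 ⟨⟨?_, ?_⟩, ?_, ?_⟩⟩
  · constructor
    · intro p hp; rw [Finset.mem_singleton] at hp; subst hp; norm_num
    · intro p hp q hq hne
      rw [Finset.mem_singleton] at hp hq; subst hp; subst hq; exact absurd rfl hne
  · rw [points, Finset.singleton_biUnion]
    decide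
  · exact ⟨(1,2), Finset.mem_singleton_self _⟩
  · intro p hp q hq
    rw [Finset.mem_singleton] at hp hq; subst hp; subst hq
    exact Relation.ReflTransGen.refl

lemma one_le_c {m : ℕ} (hm : 1 ≤ m) : 1 ≤ c m := by
  induction m with
  | zero => omega
  | succ k ih =>
    rcases Nat.eq_or_lt_of_le hm with h | h
    · rw [← h] at *; exact one_le_c_one
    · have hk : 1 ≤ k := by omega
      have := step_c (m := k + 1) (by omega)
      have h2 : 1 ≤ (2*(k+1) - 3) * c k := Nat.one_le_iff_ne_zero.2 (by
        have := ih hk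
        have : c k ≠ 0 := by omega
        have h3 : 2*(k+1) - 3 ≠ 0 := by omega
        positivity)
      calc 1 ≤ (2*(k+1)-3) * c ((k+1)-1) := by simpa using h2
      _ ≤ c (k+1) := this

lemma chain_c {n : ℕ} (k : ℕ) (h : k + 1 ≤ n) :
    c (n - k) * ∏ i ∈ Finset.range k, (2*(n-k+i) - 1) ≤ c n := by
  induction k with
  | zero => simp
  | succ k ih =>
    have hrw : ∀ i, 2*(n-(k+1)+(i+1)) - 1 = 2*(n-k+i) - 1 := by intro i; omega
    rw [Finset.prod_range_succ']
    have h1 : c (n - (k+1)) * (2*(n-(k+1)+0) - 1) ≤ c (n-k) := by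
      have hstep := step_c (m := n - k) (by omega)
      have e1 : n - k - 1 = n - (k+1) := by omega
      have e2 : 2*(n-k) - 3 = 2*(n-(k+1)+0) - 1 := by omega
      rw [e1, e2] at hstep
      rw [Nat.mul_comm]; exact hstep
    calc c (n-(k+1)) * ((∏ i ∈ Finset.range k, (2*(n-(k+1)+(i+1)) - 1)) * (2*(n-(k+1)+0) - 1))
        = (c (n-(k+1)) * (2*(n-(k+1)+0) - 1)) * ∏ i ∈ Finset.range k, (2*(n-k+i) - 1) := by
          rw [Finset.prod_congr rfl (fun i _ => by rw [hrw i])]; ring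
    _ ≤ c (n-k) * ∏ i ∈ Finset.range k, (2*(n-k+i) - 1) :=
          Nat.mul_le_mul_right _ h1
    _ ≤ c n := ih (by omega)

-- ===== analytic part =====
open Asymptotics Filter


/-- for fixed `j ≥ 2`,
`(n-1) · Σ_{k=j}^{n-j} c_k c_{n-k} / c_n = O(1/n^{j-1})` as `n → ∞`. -/
theorem stmt5 (j : ℕ) (hj : 2 ≤ j) :
    (fun n : ℕ => ((n : ℝ) - 1) *
        (∑ k ∈ Finset.Icc j (n - j), (c k : ℝ) * (c (n - k) : ℝ)) / (c n : ℝ))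
      =O[atTop] fun n : ℕ => 1 / (n : ℝ) ^ (j - 1) := by

  rw [Asymptotics.isBigO_iff]
  refine ⟨5 * (2*j)^j * 2^(j-1), ?_⟩
  filter_upwards [Filter.eventually_ge_atTop (2*j + 4)] with n hn
  have hn8 : 8 ≤ n := by omega
  set M := n / 2 with hM
  have hcn : (0:ℝ) < (c n : ℝ) := by
    have := one_le_c (m := n) (by omega); exact_mod_cast Nat.lt_of_lt_of_le Nat.zero_lt_one this
  have hn1 : (0:ℝ) < (n:ℝ) - 1 := by
    have : (1:ℝ) < (n:ℝ) := by exact_mod_cast (by omega : 1 < n)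
    linarith
  set B : ℝ := (2*(j:ℝ)/((n:ℝ)-1))^j with hB
  have hBnn : 0 ≤ B := by positivity
  set tm : ℕ → ℝ := fun k => (c k : ℝ) * (c (n - k) : ℝ) with htm
  have htmnn : ∀ k, 0 ≤ tm k := fun k => by positivity
  -- Step A : split and reflect
  have hsplit : Finset.Icc j (n-j) = Finset.Icc j M ∪ Finset.Ioc M (n-j) := by
    ext x
    simp only [Finset.mem_Icc, Finset.mem_union, Finset.mem_Ioc]
    omega
  have hdisj : Disjoint (Finset.Icc j M) (Finset.Ioc M (n-j)) := by
    rw [Finset.disjoint_left]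
    intro x hx hx'
    rw [Finset.mem_Icc] at hx; rw [Finset.mem_Ioc] at hx'
    omega
  have hrefl : ∑ k ∈ Finset.Ioc M (n-j), tm k ≤ ∑ k ∈ Finset.Icc j M, tm k := by
    have heq : ∑ k ∈ Finset.Ioc M (n-j), tm k = ∑ k ∈ Finset.Icc j (n-M-1), tm k := by
      refine Finset.sum_nbij' (fun k => n - k) (fun k => n - k) ?_ ?_ ?_ ?_ ?_
      · intro a ha; rw [Finset.mem_Ioc] at ha; simp only [Finset.mem_Icc]; omega
      · intro a ha; rw [Finset.mem_Icc] at ha; simp only [Finset.mem_Ioc]; omega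
      · intro a ha; rw [Finset.mem_Ioc] at ha; show n - (n - a) = a; omega
      · intro a ha; rw [Finset.mem_Icc] at ha; show n - (n - a) = a; omega
      · intro a ha
        rw [Finset.mem_Ioc] at ha
        have h9 : n - (n - a) = a := by omega
        rw [htm]; simp only []; rw [h9, mul_comm]
    rw [heq]
    refine Finset.sum_le_sum_of_subset_of_nonneg ?_ (fun k _ _ => htmnn k)
    intro x hx
    rw [Finset.mem_Icc] at hx ⊢
    omega
  -- Step B : term bound
  have hterm : ∀ k ∈ Finset.Icc j M, tm k ≤ (c n : ℝ) * (B * (3/5)^(k-j)) := by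
    intro k hk
    rw [Finset.mem_Icc] at hk
    obtain ⟨hjk, hkM⟩ := hk
    have hkn : k + 1 ≤ n := by omega
    set P : ℕ := ∏ i ∈ Finset.range k, (2*(n-k+i) - 1) with hP
    have hPpos : 0 < P := Finset.prod_pos (fun i _ => by omega)
    have hPR : (0:ℝ) < (P:ℝ) := by exact_mod_cast hPpos
    have hchain : (c (n-k) : ℝ) * (P:ℝ) ≤ (c n : ℝ) := by exact_mod_cast chain_c k hkn
    have h1 : (c (n-k) : ℝ) ≤ (c n : ℝ) / (P:ℝ) := (le_div_iff₀ hPR).2 hchain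
    have h2 : (c k : ℝ) ≤ (oddFac k : ℝ) := by exact_mod_cast c_le_oddFac k
    have hmul : tm k ≤ (oddFac k : ℝ) * ((c n : ℝ) / (P:ℝ)) := by
      rw [htm]; dsimp only
      exact mul_le_mul h2 h1 (by positivity) (by positivity)
    have hratio : (oddFac k : ℝ) / (P:ℝ) ≤ B * (3/5)^(k-j) := by
      have hcast : (oddFac k : ℝ) / (P:ℝ) =
          ∏ i ∈ Finset.range k, (((2*i+1 : ℕ) : ℝ) / ((2*(n-k+i) - 1 : ℕ) : ℝ)) := by
        rw [oddFac, hP, Nat.cast_prod, Nat.cast_prod, Finset.prod_div_distrib]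
      rw [hcast, Finset.range_eq_Ico,
        ← Finset.prod_Ico_consecutive _ (Nat.zero_le j) hjk]
      have hb1 : ∏ i ∈ Finset.Ico 0 j, (((2*i+1 : ℕ) : ℝ) / ((2*(n-k+i) - 1 : ℕ) : ℝ)) ≤ B := by
        have : B = ∏ _i ∈ Finset.Ico 0 j, (2*(j:ℝ)/((n:ℝ)-1)) := by
          rw [Finset.prod_const, Nat.card_Ico, hB, Nat.sub_zero]
        rw [this]
        refine Finset.prod_le_prod (fun i _ => by positivity) ?_
        intro i hi
        rw [Finset.mem_Ico] at hi
        have hnum : ((2*i+1 : ℕ) : ℝ) ≤ 2*(j:ℝ) := by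
          have : (2*i+1 : ℕ) ≤ 2*j := by omega
          exact_mod_cast this
        have hden : ((n:ℝ)-1) ≤ ((2*(n-k+i) - 1 : ℕ) : ℝ) := by
          have h3 : n - 1 ≤ 2*(n-k+i) - 1 := by omega
          have h4 : ((n - 1 : ℕ):ℝ) ≤ ((2*(n-k+i) - 1 : ℕ) : ℝ) := by exact_mod_cast h3
          have h5 : ((n - 1 : ℕ):ℝ) = (n:ℝ) - 1 := by
            have : 1 ≤ n := by omega
            push_cast [this]; ring
          linarith
        exact div_le_div₀ (by positivity) hnum hn1 hden
      have hb2 : ∏ i ∈ Finset.Ico j k, (((2*i+1 : ℕ) : ℝ) / ((2*(n-k+i) - 1 : ℕ) : ℝ))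
          ≤ (3/5)^(k-j) := by
        have : ((3:ℝ)/5)^(k-j) = ∏ _i ∈ Finset.Ico j k, ((3:ℝ)/5) := by
          rw [Finset.prod_const, Nat.card_Ico]
        rw [this]
        refine Finset.prod_le_prod (fun i _ => by positivity) ?_
        intro i hi
        rw [Finset.mem_Ico] at hi
        have hdenpos : (0:ℝ) < ((2*(n-k+i) - 1 : ℕ) : ℝ) := by
          have : 0 < 2*(n-k+i) - 1 := by omega
          exact_mod_cast this
        rw [div_le_div_iff₀ hdenpos (by norm_num : (0:ℝ) < 5)]
        have hnat : 5*(2*i+1) ≤ 3*(2*(n-k+i) - 1) := by omega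
        have : ((2*i+1 : ℕ):ℝ) * 5 ≤ ((2*(n-k+i) - 1 : ℕ):ℝ) * 3 := by
          have := (Nat.cast_le (α := ℝ)).2 hnat
          push_cast at this ⊢
          linarith
        linarith
      exact mul_le_mul hb1 hb2 (Finset.prod_nonneg (fun i _ => by positivity)) hBnn
    calc tm k ≤ (oddFac k : ℝ) * ((c n : ℝ) / (P:ℝ)) := hmul
    _ = ((oddFac k : ℝ) / (P:ℝ)) * (c n : ℝ) := by ring
    _ ≤ (B * (3/5)^(k-j)) * (c n : ℝ) := mul_le_mul_of_nonneg_right hratio (le_of_lt hcn)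
    _ = (c n : ℝ) * (B * (3/5)^(k-j)) := by ring
  -- Step C : geometric sum
  have hgeo : ∑ k ∈ Finset.Icc j M, ((3:ℝ)/5)^(k-j) ≤ 5/2 := by
    rcases lt_or_ge M j with h | h
    · rw [Finset.Icc_eq_empty (by omega)]
      norm_num
    · have : ∑ k ∈ Finset.Icc j M, ((3:ℝ)/5)^(k-j)
          = ∑ i ∈ Finset.range (M+1-j), ((3:ℝ)/5)^i := by
        rw [← Finset.Ico_add_one_right_eq_Icc, Finset.sum_Ico_eq_sum_range]
        refine Finset.sum_congr rfl (fun i _ => by congr 1; omega)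
      rw [this, geom_sum_eq (by norm_num : ((3:ℝ)/5) ≠ 1)]
      have h1 : (0:ℝ) ≤ ((3:ℝ)/5)^(M+1-j) := by positivity
      have h2 : ((3:ℝ)/5)^(M+1-j) ≤ 1 := pow_le_one₀ (by norm_num) (by norm_num)
      rw [div_le_iff_of_neg (by norm_num : ((3:ℝ)/5) - 1 < 0)]
      linarith
  -- Step D : assemble
  have hsum1 : ∑ k ∈ Finset.Icc j M, tm k ≤ (c n : ℝ) * B * (5/2) := by
    calc ∑ k ∈ Finset.Icc j M, tm k ≤ ∑ k ∈ Finset.Icc j M, (c n : ℝ) * (B * (3/5)^(k-j)) :=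
          Finset.sum_le_sum hterm
    _ = (c n : ℝ) * B * ∑ k ∈ Finset.Icc j M, ((3:ℝ)/5)^(k-j) := by
          rw [Finset.mul_sum]
          refine Finset.sum_congr rfl (fun k _ => by ring)
    _ ≤ (c n : ℝ) * B * (5/2) := by
          refine mul_le_mul_of_nonneg_left hgeo (by positivity)
  have hS : ∑ k ∈ Finset.Icc j (n-j), tm k ≤ 5 * ((c n : ℝ) * B) := by
    rw [hsplit, Finset.sum_union hdisj]
    calc (∑ k ∈ Finset.Icc j M, tm k) + ∑ k ∈ Finset.Ioc M (n-j), tm k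
        ≤ (∑ k ∈ Finset.Icc j M, tm k) + ∑ k ∈ Finset.Icc j M, tm k := by linarith [hrefl]
    _ ≤ ((c n : ℝ) * B * (5/2)) + ((c n : ℝ) * B * (5/2)) := by linarith [hsum1]
    _ = 5 * ((c n : ℝ) * B) := by ring
  have hmain : ((n : ℝ) - 1) * (∑ k ∈ Finset.Icc j (n - j), (c k : ℝ) * (c (n - k) : ℝ))
      / (c n : ℝ) ≤ 5 * ((n:ℝ)-1) * B := by
    rw [div_le_iff₀ hcn]
    calc ((n : ℝ) - 1) * (∑ k ∈ Finset.Icc j (n - j), (c k : ℝ) * (c (n - k) : ℝ))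
        = ((n : ℝ) - 1) * ∑ k ∈ Finset.Icc j (n-j), tm k := rfl
    _ ≤ ((n : ℝ) - 1) * (5 * ((c n : ℝ) * B)) := mul_le_mul_of_nonneg_left hS (le_of_lt hn1)
    _ = 5 * ((n:ℝ)-1) * B * (c n : ℝ) := by ring
  have hfinal : 5 * ((n:ℝ)-1) * B ≤ (5 * (2*j)^j * 2^(j-1)) * (1 / (n:ℝ)^(j-1)) := by
    have hBval : ((n:ℝ)-1) * B = (2*(j:ℝ))^j / ((n:ℝ)-1)^(j-1) := by
      rw [hB, div_pow]
      have hj1 : j = (j-1) + 1 := by omega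
      rw [hj1, pow_succ ((n:ℝ)-1)]
      field_simp
      ring
      rw [show 1 + (j-1) - 1 = j-1 by omega]
    rw [mul_assoc, hBval]
    have hpow : ((n:ℝ))^(j-1) ≤ 2^(j-1) * ((n:ℝ)-1)^(j-1) := by
      rw [← mul_pow]
      refine pow_le_pow_left₀ (by positivity) ?_ _
      have hc8 : (8:ℝ) ≤ (n:ℝ) := by exact_mod_cast hn8
      linarith
    have hpos1 : (0:ℝ) < ((n:ℝ)-1)^(j-1) := by positivity
    have hpos2 : (0:ℝ) < ((n:ℝ))^(j-1) := by positivity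
    have h5 : 5 * ((2*(j:ℝ))^j / ((n:ℝ)-1)^(j-1)) = (5*(2*(j:ℝ))^j) / ((n:ℝ)-1)^(j-1) := by
      ring
    have h6 : (5 * (2*(j:ℝ))^j * 2^(j-1)) * (1 / (n:ℝ)^(j-1))
        = (5*(2*(j:ℝ))^j*2^(j-1)) / (n:ℝ)^(j-1) := by ring
    rw [h5, h6, div_le_div_iff₀ hpos1 hpos2]
    calc 5*(2*(j:ℝ))^j * (n:ℝ)^(j-1) ≤ 5*(2*(j:ℝ))^j * (2^(j-1) * ((n:ℝ)-1)^(j-1)) :=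
          mul_le_mul_of_nonneg_left hpow (by positivity)
    _ = 5*(2*(j:ℝ))^j*2^(j-1) * ((n:ℝ)-1)^(j-1) := by ring
  have hnn : 0 ≤ ((n : ℝ) - 1) * (∑ k ∈ Finset.Icc j (n - j), (c k : ℝ) * (c (n - k) : ℝ))
      / (c n : ℝ) := by
    have h0 : 0 ≤ ∑ k ∈ Finset.Icc j (n-j), tm k := Finset.sum_nonneg (fun k _ => htmnn k)
    exact div_nonneg (mul_nonneg hn1.le h0) hcn.le
  rw [Real.norm_eq_abs, Real.norm_eq_abs, abs_of_nonneg hnn, abs_of_nonneg (by positivity)]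
  calc ((n : ℝ) - 1) * (∑ k ∈ Finset.Icc j (n - j), (c k : ℝ) * (c (n - k) : ℝ)) / (c n : ℝ)
      ≤ 5 * ((n:ℝ)-1) * B := hmain
  _ ≤ (5 * (2*j)^j * 2^(j-1)) * (1 / (n:ℝ)^(j-1)) := hfinal
  _ = 5 * (2*↑j)^j * 2^(j-1) * (1 / (n:ℝ)^(j-1)) := by norm_num


end ChordStmt
end
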